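/- If A = (a_{kj}) is a scalar matrix that is a Schur multiplier of B(ℓ²) and T ∈ B(H), then the operator-valued matrix (a_{kj}T) is a two-sided Schur multiplier of B(ℓ²(H)) with ‖(a_{kj}T)‖_{M(ℓ²(H))} = ‖A‖_{M(ℓ²)}·‖T‖_{B(H)}. -/

import Mathlib

open Finset Filter

noncomputable section

variable {H : Type*} [NormedAddCommGroup H] [InnerProductSpace ℂ H]
  [CompleteSpace H] [TopologicalSpace.SeparableSpace H]

/-- `A` defines a bounded operator on `ℓ²(H)` with norm at most `C`, expressed through
uniform bounds of the associated bilinear form on finitely supported sequences. -/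
def SchurBoundedBy (A : ℕ → ℕ → (H →L[ℂ] H)) (C : ℝ) : Prop :=
  ∀ (F G : Finset ℕ) (x y : ℕ → H),
    ‖∑ k ∈ G, ∑ j ∈ F, (inner ℂ (A k j (x j)) (y k) : ℂ)‖ ≤
      C * Real.sqrt (∑ j ∈ F, ‖x j‖ ^ 2) * Real.sqrt (∑ k ∈ G, ‖y k‖ ^ 2)

/-- `A ∈ B(ℓ²(H))`. -/
def MemB (A : ℕ → ℕ → (H →L[ℂ] H)) : Prop :=
  ∃ C, 0 ≤ C ∧ SchurBoundedBy A C

/-- The Schur product of two operator matrices: entrywise composition. -/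
def schur (A B : ℕ → ℕ → (H →L[ℂ] H)) : ℕ → ℕ → (H →L[ℂ] H) :=
  fun k j => (A k j).comp (B k j)

/-- `A` is a right Schur multiplier with multiplier norm at most `C`. -/
def MrBoundedBy (A : ℕ → ℕ → (H →L[ℂ] H)) (C : ℝ) : Prop :=
  ∀ (B : ℕ → ℕ → (H →L[ℂ] H)) (D : ℝ), 0 ≤ D → SchurBoundedBy B D →
    SchurBoundedBy (schur B A) (C * D)

/-- `A` is a left Schur multiplier with multiplier norm at most `C`. -/
def MlBoundedBy (A : ℕ → ℕ → (H →L[ℂ] H)) (C : ℝ) : Prop :=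
  ∀ (B : ℕ → ℕ → (H →L[ℂ] H)) (D : ℝ), 0 ≤ D → SchurBoundedBy B D →
    SchurBoundedBy (schur A B) (C * D)

/-- `A ∈ M_r(ℓ²(H))`. -/
def MemMr (A : ℕ → ℕ → (H →L[ℂ] H)) : Prop :=
  ∃ C, 0 ≤ C ∧ MrBoundedBy A C

/-- `A ∈ M_l(ℓ²(H))`. -/
def MemMl (A : ℕ → ℕ → (H →L[ℂ] H)) : Prop :=
  ∃ C, 0 ≤ C ∧ MlBoundedBy A C

/-- A matrix polynomial: supported on finitely many diagonals, with uniformly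
bounded operator entries. -/
def IsMatPoly (A : ℕ → ℕ → (H →L[ℂ] H)) : Prop :=
  (∃ N : ℕ, ∀ k j : ℕ, N < ((j : ℤ) - (k : ℤ)).natAbs → A k j = 0) ∧
    ∃ M : ℝ, ∀ k j : ℕ, ‖A k j‖ ≤ M

/-- `A ∈ L¹_r(ℓ²(H))`: `A` is a right Schur multiplier lying in the closure of the
matrix polynomials in the right multiplier norm. -/
def MemL1r (A : ℕ → ℕ → (H →L[ℂ] H)) : Prop :=
  MemMr A ∧ ∀ ε : ℝ, 0 < ε → ∃ P : ℕ → ℕ → (H →L[ℂ] H),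
    IsMatPoly P ∧ MrBoundedBy (fun k j => A k j - P k j) ε

/-- `A ∈ L¹_l(ℓ²(H))`: `A` is a left Schur multiplier lying in the closure of the
matrix polynomials in the left multiplier norm. -/
def MemL1l (A : ℕ → ℕ → (H →L[ℂ] H)) : Prop :=
  MemMl A ∧ ∀ ε : ℝ, 0 < ε → ∃ P : ℕ → ℕ → (H →L[ℂ] H),
    IsMatPoly P ∧ MlBoundedBy (fun k j => A k j - P k j) ε

/-- A scalar matrix defines a bounded operator on `ℓ²` with norm at most `C`. -/
def CBoundedBy (A : ℕ → ℕ → ℂ) (C : ℝ) : Prop :=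
  ∀ (F G : Finset ℕ) (x y : ℕ → ℂ),
    ‖∑ k ∈ G, ∑ j ∈ F, A k j * x j * (starRingEnd ℂ) (y k)‖ ≤
      C * Real.sqrt (∑ j ∈ F, ‖x j‖ ^ 2) * Real.sqrt (∑ k ∈ G, ‖y k‖ ^ 2)

/-- A scalar matrix is a Schur multiplier of `B(ℓ²)` with multiplier norm at most `C`. -/
def CMulBoundedBy (A : ℕ → ℕ → ℂ) (C : ℝ) : Prop :=
  ∀ (B : ℕ → ℕ → ℂ) (D : ℝ), 0 ≤ D → CBoundedBy B D →
    CBoundedBy (fun k j => A k j * B k j) (C * D)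

-- helper: sqrt sum monotone
lemma sqrt_sum_sq_mono {F : Finset ℕ} {a b : ℕ → ℝ} (ha : ∀ j ∈ F, 0 ≤ a j)
    (h : ∀ j ∈ F, a j ≤ b j) :
    Real.sqrt (∑ j ∈ F, a j ^ 2) ≤ Real.sqrt (∑ j ∈ F, b j ^ 2) :=
  Real.sqrt_le_sqrt (Finset.sum_le_sum fun j hj => pow_le_pow_left₀ (ha j hj) (h j hj) 2)

lemma bound_mono {C s1 t1 s2 t2 : ℝ} (hC : 0 ≤ C) (hs1 : 0 ≤ s1) (ht1 : 0 ≤ t1)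
    (hs : s1 ≤ s2) (ht : t1 ≤ t2) : C * s1 * t1 ≤ C * s2 * t2 :=
  mul_le_mul (mul_le_mul_of_nonneg_left hs hC) ht ht1
    (mul_nonneg hC (hs1.trans hs))

-- L0: conjugate matrix
lemma cBoundedBy_conj {B : ℕ → ℕ → ℂ} {D : ℝ} (hB : CBoundedBy B D) :
    CBoundedBy (fun k j => (starRingEnd ℂ) (B k j)) D := by
  intro F G x y
  have key : ∑ k ∈ G, ∑ j ∈ F, (starRingEnd ℂ) (B k j) * x j * (starRingEnd ℂ) (y k)
      = (starRingEnd ℂ) (∑ k ∈ G, ∑ j ∈ F,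
          B k j * ((starRingEnd ℂ) (x j)) * (starRingEnd ℂ) ((starRingEnd ℂ) (y k))) := by
    rw [map_sum]
    refine Finset.sum_congr rfl fun k _ => ?_
    rw [map_sum]
    refine Finset.sum_congr rfl fun j _ => ?_
    simp [map_mul]
  simp only []
  rw [key, RCLike.norm_conj]
  have := hB F G (fun j => (starRingEnd ℂ) (x j)) (fun k => (starRingEnd ℂ) (y k))
  simpa using this

lemma sqrt_sum_comp (S : H →L[ℂ] H) (F : Finset ℕ) (x : ℕ → H) :
    Real.sqrt (∑ j ∈ F, ‖S (x j)‖ ^ 2) ≤ ‖S‖ * Real.sqrt (∑ j ∈ F, ‖x j‖ ^ 2) := by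
  rw [← Real.sqrt_sq (norm_nonneg S), ← Real.sqrt_mul (sq_nonneg _)]
  apply Real.sqrt_le_sqrt
  rw [Finset.mul_sum]
  refine Finset.sum_le_sum fun j hj => ?_
  calc ‖S (x j)‖ ^ 2 ≤ (‖S‖ * ‖x j‖) ^ 2 :=
        pow_le_pow_left₀ (norm_nonneg _) (S.le_opNorm _) 2
    _ = ‖S‖ ^ 2 * ‖x j‖ ^ 2 := by ring

lemma schurBoundedBy_comp_left {B : ℕ → ℕ → (H →L[ℂ] H)} {D : ℝ} (hD : 0 ≤ D)
    (hB : SchurBoundedBy B D) (T : H →L[ℂ] H) :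
    SchurBoundedBy (fun k j => T.comp (B k j)) (‖T‖ * D) := by
  intro F G x y
  have key : ∑ k ∈ G, ∑ j ∈ F, (inner ℂ ((T.comp (B k j)) (x j)) (y k) : ℂ)
      = ∑ k ∈ G, ∑ j ∈ F,
          (inner ℂ ((B k j) (x j)) ((ContinuousLinearMap.adjoint T) (y k)) : ℂ) := by
    simp [ContinuousLinearMap.adjoint_inner_right]
  simp only []
  rw [key]
  calc ‖∑ k ∈ G, ∑ j ∈ F,
        (inner ℂ ((B k j) (x j)) ((ContinuousLinearMap.adjoint T) (y k)) : ℂ)‖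
      ≤ D * Real.sqrt (∑ j ∈ F, ‖x j‖ ^ 2) *
          Real.sqrt (∑ k ∈ G, ‖(ContinuousLinearMap.adjoint T) (y k)‖ ^ 2) :=
        hB F G x _
    _ ≤ D * Real.sqrt (∑ j ∈ F, ‖x j‖ ^ 2) *
          (‖ContinuousLinearMap.adjoint T‖ * Real.sqrt (∑ k ∈ G, ‖y k‖ ^ 2)) := by
        exact mul_le_mul_of_nonneg_left (sqrt_sum_comp _ G y)
          (mul_nonneg hD (Real.sqrt_nonneg _))
    _ = ‖T‖ * D * Real.sqrt (∑ j ∈ F, ‖x j‖ ^ 2) * Real.sqrt (∑ k ∈ G, ‖y k‖ ^ 2) := by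
        rw [ContinuousLinearMap.adjoint.norm_map T]; ring

lemma schurBoundedBy_comp_right {B : ℕ → ℕ → (H →L[ℂ] H)} {D : ℝ} (hD : 0 ≤ D)
    (hB : SchurBoundedBy B D) (T : H →L[ℂ] H) :
    SchurBoundedBy (fun k j => (B k j).comp T) (‖T‖ * D) := by
  intro F G x y
  simp only [ContinuousLinearMap.comp_apply]
  calc ‖∑ k ∈ G, ∑ j ∈ F, (inner ℂ ((B k j) (T (x j))) (y k) : ℂ)‖
      ≤ D * Real.sqrt (∑ j ∈ F, ‖T (x j)‖ ^ 2) * Real.sqrt (∑ k ∈ G, ‖y k‖ ^ 2) :=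
        hB F G (fun j => T (x j)) y
    _ ≤ D * (‖T‖ * Real.sqrt (∑ j ∈ F, ‖x j‖ ^ 2)) * Real.sqrt (∑ k ∈ G, ‖y k‖ ^ 2) :=
        mul_le_mul_of_nonneg_right
          (mul_le_mul_of_nonneg_left (sqrt_sum_comp _ F x) hD) (Real.sqrt_nonneg _)
    _ = ‖T‖ * D * Real.sqrt (∑ j ∈ F, ‖x j‖ ^ 2) * Real.sqrt (∑ k ∈ G, ‖y k‖ ^ 2) := by
        ring

set_option linter.unusedSectionVars false

/-- Core lemma: a scalar Schur multiplier acts entrywise (by `smul`) on operator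
matrices bounded on `ℓ²(H)`. -/
lemma smul_schur_core {A : ℕ → ℕ → ℂ} {C : ℝ} (hC : 0 ≤ C) (hA : CMulBoundedBy A C)
    {B : ℕ → ℕ → (H →L[ℂ] H)} {D : ℝ} (hD : 0 ≤ D) (hB : SchurBoundedBy B D) :
    SchurBoundedBy (fun k j => A k j • B k j) (C * D) := by
  intro F G x y
  set c : ℕ → ℕ → ℂ := fun k j => inner ℂ ((B k j) (x j)) (y k) with hc
  set b : ℕ → ℕ → ℂ :=
    fun k j => (starRingEnd ℂ) (c k j) / ((‖x j‖ : ℂ) * (‖y k‖ : ℂ)) with hb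
  have hbB : CBoundedBy b D := by
    intro F' G' u v
    set x' : ℕ → H := fun j => (u j / (‖x j‖ : ℂ)) • x j with hx'
    set y' : ℕ → H := fun k => (v k / (‖y k‖ : ℂ)) • y k with hy'
    have hterm : ∀ k j, b k j * u j * (starRingEnd ℂ) (v k)
        = (starRingEnd ℂ) (inner ℂ ((B k j) (x' j)) (y' k) : ℂ) := by
      intro k j
      simp only [hb, hc, hx', hy', map_smul, inner_smul_left, inner_smul_right,
        map_mul, map_div₀, Complex.conj_ofReal, Complex.conj_conj]
      ring
    have hsum : ∑ k ∈ G', ∑ j ∈ F', b k j * u j * (starRingEnd ℂ) (v k)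
        = (starRingEnd ℂ) (∑ k ∈ G', ∑ j ∈ F',
            (inner ℂ ((B k j) (x' j)) (y' k) : ℂ)) := by
      rw [map_sum]
      exact Finset.sum_congr rfl fun k _ => by
        rw [map_sum]; exact Finset.sum_congr rfl fun j _ => hterm k j
    have hxn : ∀ j ∈ F', ‖x' j‖ ≤ ‖u j‖ := by
      intro j _
      by_cases hxj : x j = 0
      · simp [hx', hxj]
      · rw [hx', norm_smul, norm_div, Complex.norm_real, norm_norm,
          div_mul_cancel₀ _ (norm_ne_zero_iff.2 hxj)]
    have hyn : ∀ k ∈ G', ‖y' k‖ ≤ ‖v k‖ := by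
      intro k _
      by_cases hyk : y k = 0
      · simp [hy', hyk]
      · rw [hy', norm_smul, norm_div, Complex.norm_real, norm_norm,
          div_mul_cancel₀ _ (norm_ne_zero_iff.2 hyk)]
    calc ‖∑ k ∈ G', ∑ j ∈ F', b k j * u j * (starRingEnd ℂ) (v k)‖
        = ‖∑ k ∈ G', ∑ j ∈ F', (inner ℂ ((B k j) (x' j)) (y' k) : ℂ)‖ := by
          rw [hsum, RCLike.norm_conj]
      _ ≤ D * Real.sqrt (∑ j ∈ F', ‖x' j‖ ^ 2) * Real.sqrt (∑ k ∈ G', ‖y' k‖ ^ 2) :=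
          hB F' G' x' y'
      _ ≤ D * Real.sqrt (∑ j ∈ F', ‖u j‖ ^ 2) * Real.sqrt (∑ k ∈ G', ‖v k‖ ^ 2) :=
          bound_mono hD (Real.sqrt_nonneg _) (Real.sqrt_nonneg _)
            (sqrt_sum_sq_mono (fun j _ => norm_nonneg _) hxn)
            (sqrt_sum_sq_mono (fun k _ => norm_nonneg _) hyn)
  have hAb := hA b D hD hbB
  have hterm2 : ∀ k j, (inner ℂ ((A k j • B k j) (x j)) (y k) : ℂ)
      = (starRingEnd ℂ) ((A k j * b k j) * ((‖x j‖ : ℝ) : ℂ)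
          * (starRingEnd ℂ) ((‖y k‖ : ℝ) : ℂ)) := by
    intro k j
    by_cases hxj : x j = 0
    · simp [hb, hc, hxj]
    by_cases hyk : y k = 0
    · simp [hb, hc, hyk]
    · have hx0 : ((‖x j‖ : ℝ) : ℂ) ≠ 0 :=
        Complex.ofReal_ne_zero.2 (norm_ne_zero_iff.2 hxj)
      have hy0 : ((‖y k‖ : ℝ) : ℂ) ≠ 0 :=
        Complex.ofReal_ne_zero.2 (norm_ne_zero_iff.2 hyk)
      simp only [hb, hc, ContinuousLinearMap.smul_apply, inner_smul_left,
        map_mul, map_div₀, Complex.conj_ofReal, Complex.conj_conj]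
      field_simp
  have hsum2 : ∑ k ∈ G, ∑ j ∈ F, (inner ℂ ((A k j • B k j) (x j)) (y k) : ℂ)
      = (starRingEnd ℂ) (∑ k ∈ G, ∑ j ∈ F,
          (A k j * b k j) * ((‖x j‖ : ℝ) : ℂ) * (starRingEnd ℂ) ((‖y k‖ : ℝ) : ℂ)) := by
    rw [map_sum]
    exact Finset.sum_congr rfl fun k _ => by
      rw [map_sum]; exact Finset.sum_congr rfl fun j _ => hterm2 k j
  have hnx : ∀ j, ‖((‖x j‖ : ℝ) : ℂ)‖ = ‖x j‖ := fun j => by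
    rw [Complex.norm_real, norm_norm]
  have hny : ∀ k, ‖((‖y k‖ : ℝ) : ℂ)‖ = ‖y k‖ := fun k => by
    rw [Complex.norm_real, norm_norm]
  calc ‖∑ k ∈ G, ∑ j ∈ F, (inner ℂ (((fun k j => A k j • B k j) k j) (x j)) (y k) : ℂ)‖
      = ‖∑ k ∈ G, ∑ j ∈ F,
          (A k j * b k j) * ((‖x j‖ : ℝ) : ℂ) * (starRingEnd ℂ) ((‖y k‖ : ℝ) : ℂ)‖ := by
        simp only []; rw [hsum2, RCLike.norm_conj]
    _ ≤ C * D * Real.sqrt (∑ j ∈ F, ‖((‖x j‖ : ℝ) : ℂ)‖ ^ 2)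
          * Real.sqrt (∑ k ∈ G, ‖((‖y k‖ : ℝ) : ℂ)‖ ^ 2) :=
        hAb F G (fun j => ((‖x j‖ : ℝ) : ℂ)) (fun k => ((‖y k‖ : ℝ) : ℂ))
    _ = C * D * Real.sqrt (∑ j ∈ F, ‖x j‖ ^ 2) * Real.sqrt (∑ k ∈ G, ‖y k‖ ^ 2) := by
        simp only [hnx, hny]
lemma up_Ml {A : ℕ → ℕ → ℂ} {C : ℝ} (hC : 0 ≤ C) (hA : CMulBoundedBy A C)
    (T : H →L[ℂ] H) : MlBoundedBy (fun k j => A k j • T) (C * ‖T‖) := by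
  intro B D hD hB
  have h1 := schurBoundedBy_comp_left hD hB T
  have h2 := smul_schur_core hC hA (mul_nonneg (norm_nonneg T) hD) h1
  have heq : schur (fun k j => A k j • T) B = fun k j => A k j • (T.comp (B k j)) := by
    funext k j; exact ContinuousLinearMap.smul_comp _ _ _
  rw [heq]
  have : C * (‖T‖ * D) = C * ‖T‖ * D := by ring
  rwa [this] at h2

lemma up_Mr {A : ℕ → ℕ → ℂ} {C : ℝ} (hC : 0 ≤ C) (hA : CMulBoundedBy A C)
    (T : H →L[ℂ] H) : MrBoundedBy (fun k j => A k j • T) (C * ‖T‖) := by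
  intro B D hD hB
  have h1 := schurBoundedBy_comp_right hD hB T
  have h2 := smul_schur_core hC hA (mul_nonneg (norm_nonneg T) hD) h1
  have heq : schur B (fun k j => A k j • T) = fun k j => A k j • ((B k j).comp T) := by
    funext k j; exact ContinuousLinearMap.comp_smul _ _ _
  rw [heq]
  have : C * (‖T‖ * D) = C * ‖T‖ * D := by ring
  rwa [this] at h2

lemma rank_one_bounded {B : ℕ → ℕ → ℂ} {D : ℝ} (hD : 0 ≤ D) (hB : CBoundedBy B D)
    {e : H} (he : ‖e‖ = 1) :
    SchurBoundedBy (fun k j => B k j • ((innerSL ℂ e).smulRight e)) D := by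
  intro F G x y
  have hterm : ∀ k j,
      (inner ℂ ((B k j • ((innerSL ℂ e).smulRight e)) (x j)) (y k) : ℂ)
        = (starRingEnd ℂ) (B k j) * (inner ℂ (x j) e : ℂ)
            * (starRingEnd ℂ) (inner ℂ (y k) e : ℂ) := by
    intro k j
    simp only [ContinuousLinearMap.smul_apply, ContinuousLinearMap.smulRight_apply,
      innerSL_apply_apply, inner_smul_left, inner_smul_right, ← inner_conj_symm e (x j),
      ← inner_conj_symm (y k) e, Complex.conj_conj]
    ring
  have hsum : ∑ k ∈ G, ∑ j ∈ F,
      (inner ℂ ((B k j • ((innerSL ℂ e).smulRight e)) (x j)) (y k) : ℂ)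
        = ∑ k ∈ G, ∑ j ∈ F, (starRingEnd ℂ) (B k j) * (inner ℂ (x j) e : ℂ)
            * (starRingEnd ℂ) (inner ℂ (y k) e : ℂ) :=
    Finset.sum_congr rfl fun k _ => Finset.sum_congr rfl fun j _ => hterm k j
  calc ‖∑ k ∈ G, ∑ j ∈ F,
        (inner ℂ (((fun k j => B k j • ((innerSL ℂ e).smulRight e)) k j) (x j)) (y k) : ℂ)‖
      = ‖∑ k ∈ G, ∑ j ∈ F, (starRingEnd ℂ) (B k j) * (inner ℂ (x j) e : ℂ)
          * (starRingEnd ℂ) (inner ℂ (y k) e : ℂ)‖ := by rw [← hsum]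
    _ ≤ D * Real.sqrt (∑ j ∈ F, ‖(inner ℂ (x j) e : ℂ)‖ ^ 2)
          * Real.sqrt (∑ k ∈ G, ‖(inner ℂ (y k) e : ℂ)‖ ^ 2) :=
        cBoundedBy_conj hB F G (fun j => (inner ℂ (x j) e : ℂ)) (fun k => (inner ℂ (y k) e : ℂ))
    _ ≤ D * Real.sqrt (∑ j ∈ F, ‖x j‖ ^ 2) * Real.sqrt (∑ k ∈ G, ‖y k‖ ^ 2) :=
        bound_mono hD (Real.sqrt_nonneg _) (Real.sqrt_nonneg _)
          (sqrt_sum_sq_mono (fun j _ => norm_nonneg _) (fun j _ => by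
            calc ‖(inner ℂ (x j) e : ℂ)‖ ≤ ‖x j‖ * ‖e‖ := norm_inner_le_norm _ _
              _ = ‖x j‖ := by rw [he, mul_one]))
          (sqrt_sum_sq_mono (fun k _ => norm_nonneg _) (fun k _ => by
            calc ‖(inner ℂ (y k) e : ℂ)‖ ≤ ‖y k‖ * ‖e‖ := norm_inner_le_norm _ _
              _ = ‖y k‖ := by rw [he, mul_one]))

set_option maxHeartbeats 1000000 in
lemma down_lemma {A : ℕ → ℕ → ℂ} {C : ℝ} {T : H →L[ℂ] H} (hC : 0 ≤ C) (hT : T ≠ 0)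
    (hMl : MlBoundedBy (fun k j => A k j • T) C) :
    CMulBoundedBy A (C / ‖T‖) := by
  intro B D hD hB F G u v
  simp only []
  set L := ‖∑ k ∈ G, ∑ j ∈ F, A k j * B k j * u j * (starRingEnd ℂ) (v k)‖ with hL
  set s := Real.sqrt (∑ j ∈ F, ‖u j‖ ^ 2) with hs
  set t := Real.sqrt (∑ k ∈ G, ‖v k‖ ^ 2) with ht
  have hL0 : 0 ≤ L := norm_nonneg _
  have hs0 : 0 ≤ s := Real.sqrt_nonneg _
  have ht0 : 0 ≤ t := Real.sqrt_nonneg _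
  have hK0 : 0 ≤ C * D * s * t :=
    mul_nonneg (mul_nonneg (mul_nonneg hC hD) hs0) ht0
  have hTpos : 0 < ‖T‖ := norm_pos_iff.2 hT
  have key : ∀ e : H, ‖e‖ = 1 → T e ≠ 0 → ‖T e‖ * L ≤ C * D * s * t := by
    intro e he hTe
    have hBP := rank_one_bounded hD hB he (B := B)
    have hschur := hMl _ D hD hBP
    set f := ((‖T e‖ : ℂ))⁻¹ • T e with hf
    have hTe0 : ((‖T e‖ : ℝ) : ℂ) ≠ 0 := Complex.ofReal_ne_zero.2 (norm_ne_zero_iff.2 hTe)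
    have hfn : ‖f‖ = 1 := by
      rw [hf, norm_smul, norm_inv, Complex.norm_real, norm_norm,
        inv_mul_cancel₀ (norm_ne_zero_iff.2 hTe)]
    have h1 : (inner ℂ e e : ℂ) = 1 := by
      rw [inner_self_eq_norm_sq_to_K, he]; norm_num
    have h2 : (inner ℂ (T e) f : ℂ) = ((‖T e‖ : ℝ) : ℂ) := by
      rw [hf, inner_smul_right, inner_self_eq_norm_sq_to_K]
      field_simp
      simp
    have hterm : ∀ k j,
        (inner ℂ ((schur (fun k j => A k j • T)
            (fun k j => B k j • ((innerSL ℂ e).smulRight e)) k j) (u j • e)) (v k • f) : ℂ)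
          = (starRingEnd ℂ) (A k j * B k j * u j * (starRingEnd ℂ) (v k))
              * ((‖T e‖ : ℝ) : ℂ) := by
      intro k j
      simp only [schur, ContinuousLinearMap.comp_apply, ContinuousLinearMap.smul_apply,
        ContinuousLinearMap.smulRight_apply, innerSL_apply_apply, map_smul,
        inner_smul_left, inner_smul_right, map_mul, Complex.conj_conj, h1, h2, map_one]
      ring
    have hsum : ∑ k ∈ G, ∑ j ∈ F,
        (inner ℂ ((schur (fun k j => A k j • T)
            (fun k j => B k j • ((innerSL ℂ e).smulRight e)) k j) (u j • e)) (v k • f) : ℂ)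
          = (starRingEnd ℂ) (∑ k ∈ G, ∑ j ∈ F,
              A k j * B k j * u j * (starRingEnd ℂ) (v k)) * ((‖T e‖ : ℝ) : ℂ) := by
      rw [map_sum, Finset.sum_mul]
      refine Finset.sum_congr rfl fun k _ => ?_
      rw [map_sum, Finset.sum_mul]
      exact Finset.sum_congr rfl fun j _ => hterm k j
    have hbound := hschur F G (fun j => u j • e) (fun k => v k • f)
    rw [hsum] at hbound
    have hnorml : ‖(starRingEnd ℂ) (∑ k ∈ G, ∑ j ∈ F,
        A k j * B k j * u j * (starRingEnd ℂ) (v k)) * ((‖T e‖ : ℝ) : ℂ)‖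
          = ‖T e‖ * L := by
      rw [norm_mul, RCLike.norm_conj, Complex.norm_real, norm_norm, hL, mul_comm]
    rw [hnorml] at hbound
    have hxs : Real.sqrt (∑ j ∈ F, ‖u j • e‖ ^ 2) = s := by
      rw [hs]; congr 1; exact Finset.sum_congr rfl fun j _ => by
        rw [norm_smul, he, mul_one]
    have hys : Real.sqrt (∑ k ∈ G, ‖v k • f‖ ^ 2) = t := by
      rw [ht]; congr 1; exact Finset.sum_congr rfl fun k _ => by
        rw [norm_smul, hfn, mul_one]
    rw [hxs, hys] at hbound
    linarith [hbound]
  have hmain : ‖T‖ * L ≤ C * D * s * t := by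
    by_contra hcon
    push_neg at hcon
    have hLpos : 0 < L := by nlinarith
    obtain ⟨ρ, hρ1, hρ2⟩ := exists_between ((div_lt_iff₀ hLpos).2 hcon)
    have hρpos : 0 < ρ := lt_of_le_of_lt (div_nonneg hK0 hLpos.le) hρ1
    obtain ⟨w, hw1, hw2⟩ := T.exists_lt_apply_of_lt_opNorm hρ2
    have hw0 : w ≠ 0 := by
      intro h
      rw [h, map_zero, norm_zero] at hw2
      linarith
    set e := ((‖w‖ : ℂ))⁻¹ • w with hee
    have hwn : (‖w‖ : ℝ) ≠ 0 := norm_ne_zero_iff.2 hw0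
    have he : ‖e‖ = 1 := by
      rw [hee, norm_smul, norm_inv, Complex.norm_real, norm_norm, inv_mul_cancel₀ hwn]
    have hTe : ρ < ‖T e‖ := by
      rw [hee, map_smul, norm_smul, norm_inv, Complex.norm_real, norm_norm]
      have h1 : 1 ≤ ‖w‖⁻¹ := by
        rw [le_inv_comm₀]
        · simpa using hw1.le
        · norm_num
        · exact (norm_pos_iff.2 hw0)
      calc ρ < ‖T w‖ := hw2
        _ = 1 * ‖T w‖ := (one_mul _).symm
        _ ≤ ‖w‖⁻¹ * ‖T w‖ := by
            exact mul_le_mul_of_nonneg_right h1 (norm_nonneg _)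
    have hTe0 : T e ≠ 0 := by
      intro h
      rw [h, norm_zero] at hTe
      linarith
    have hk := key e he hTe0
    have : ρ * L < ‖T e‖ * L := by
      exact mul_lt_mul_of_pos_right hTe hLpos
    have : (C * D * s * t) / L * L < ρ * L :=
      mul_lt_mul_of_pos_right hρ1 hLpos
    rw [div_mul_cancel₀ _ hLpos.ne'] at this
    linarith
  have heq : C / ‖T‖ * D * s * t = (C * D * s * t) / ‖T‖ := by ring
  rw [heq, le_div_iff₀ hTpos]
  linarith [hmain]

/-- If `A = (a_{kj})` is a scalar Schur multiplier of `B(ℓ²)` and `T ∈ B(H)`, then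
`(a_{kj}T)` is a two-sided Schur multiplier of `B(ℓ²(H))` with
`‖(a_{kj}T)‖_{M(ℓ²(H))} = ‖A‖_{M(ℓ²)}·‖T‖`. -/
theorem scalar_tensor_multiplier (A : ℕ → ℕ → ℂ) (T : H →L[ℂ] H)
    (hA : ∃ C, 0 ≤ C ∧ CMulBoundedBy A C) :
    (∃ C, 0 ≤ C ∧ MlBoundedBy (fun k j => A k j • T) C ∧
        MrBoundedBy (fun k j => A k j • T) C) ∧
      sInf {C | 0 ≤ C ∧ MlBoundedBy (fun k j => A k j • T) C ∧
          MrBoundedBy (fun k j => A k j • T) C} =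
        sInf {C | 0 ≤ C ∧ CMulBoundedBy A C} * ‖T‖ := by
  obtain ⟨C₁, hC₁0, hC₁⟩ := hA
  have hup : ∀ c : ℝ, 0 ≤ c → CMulBoundedBy A c →
      c * ‖T‖ ∈ {C | 0 ≤ C ∧ MlBoundedBy (fun k j => A k j • T) C ∧
        MrBoundedBy (fun k j => A k j • T) C} :=
    fun c hc hm => ⟨mul_nonneg hc (norm_nonneg T), up_Ml hc hm T, up_Mr hc hm T⟩
  have hScne : {C | 0 ≤ C ∧ CMulBoundedBy A C}.Nonempty := ⟨C₁, hC₁0, hC₁⟩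
  have hScbdd : BddBelow {C | 0 ≤ C ∧ CMulBoundedBy A C} := ⟨0, fun c hc => hc.1⟩
  have hStne : {C | 0 ≤ C ∧ MlBoundedBy (fun k j => A k j • T) C ∧
      MrBoundedBy (fun k j => A k j • T) C}.Nonempty := ⟨C₁ * ‖T‖, hup _ hC₁0 hC₁⟩
  have hStbdd : BddBelow {C | 0 ≤ C ∧ MlBoundedBy (fun k j => A k j • T) C ∧
      MrBoundedBy (fun k j => A k j • T) C} := ⟨0, fun c hc => hc.1⟩
  refine ⟨⟨C₁ * ‖T‖, hup _ hC₁0 hC₁⟩, ?_⟩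
  by_cases hT : T = 0
  · have h0mem : (0 : ℝ) ∈ {C | 0 ≤ C ∧ MlBoundedBy (fun k j => A k j • T) C ∧
        MrBoundedBy (fun k j => A k j • T) C} := by
      have := hup C₁ hC₁0 hC₁
      have h0 : C₁ * ‖T‖ = 0 := by rw [hT, norm_zero, mul_zero]
      rwa [h0] at this
    have hlhs : sInf {C | 0 ≤ C ∧ MlBoundedBy (fun k j => A k j • T) C ∧
        MrBoundedBy (fun k j => A k j • T) C} = 0 :=
      le_antisymm (csInf_le hStbdd h0mem) (le_csInf hStne fun c hc => hc.1)
    rw [hlhs, hT, norm_zero, mul_zero]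
  · have hTpos : 0 < ‖T‖ := norm_pos_iff.2 hT
    refine le_antisymm ?_ ?_
    · have h : sInf {C | 0 ≤ C ∧ MlBoundedBy (fun k j => A k j • T) C ∧
          MrBoundedBy (fun k j => A k j • T) C} / ‖T‖
            ≤ sInf {C | 0 ≤ C ∧ CMulBoundedBy A C} := by
        refine le_csInf hScne fun c hc => ?_
        rw [div_le_iff₀ hTpos]
        exact csInf_le hStbdd (hup c hc.1 hc.2)
      exact (div_le_iff₀ hTpos).1 h
    · refine le_csInf hStne fun c hc => ?_
      obtain ⟨hc0, hMl, _⟩ := hc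
      have hmem : c / ‖T‖ ∈ {C | 0 ≤ C ∧ CMulBoundedBy A C} :=
        ⟨div_nonneg hc0 hTpos.le, down_lemma hc0 hT hMl⟩
      have h := csInf_le hScbdd hmem
      rwa [le_div_iff₀ hTpos] at h
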